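/- Let φ(x) = sech²(x) and let Φ denote a branch of its inverse. For the transport equation u_t + 6uⁿ u_x = 0 (n a positive integer) with initial data φ, the generic critical point determined by the system a(u_c)t_c + Φ(u_c) = x_c, a'(u_c)t_c + Φ'(u_c) = 0, a''(u_c)t_c + Φ''(u_c) = 0 with a(u) = 6uⁿ has u_c = 2n/(2n+1), t_c = (1+2n)^{n+1/2}/(6(2n)^{n+1}), x_c = √(2n+1)/(2n) + ln((√(2n+1)+1)/√(2n)), and k = −(1/6)(a'''(u_c)t_c + Φ'''(u_c)) = (2n+1)^{9/2}/(96 n²). -/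

import Mathlib

open Real

/-- The (decreasing) branch of the inverse of `φ(x) = sech²x`:
`Φ(u) = log((1 + √(1−u))/√u)`. -/
noncomputable def Phi : ℝ → ℝ := fun u =>
  Real.log ((1 + Real.sqrt (1 - u)) / Real.sqrt u)

/-- for the transport equation `u_t + 6uⁿu_x = 0` with initial
data `φ(x) = sech²x`, the critical point determined by
`a(u_c)t_c + Φ(u_c) = x_c`, `a'(u_c)t_c + Φ'(u_c) = 0`, `a''(u_c)t_c + Φ''(u_c) = 0`
is `u_c = 2n/(2n+1)`, `t_c = (1+2n)^{n+1/2}/(6(2n)^{n+1})`,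
`x_c = √(2n+1)/(2n) + log((√(2n+1)+1)/√(2n))`, with breakup constant
`k = −(1/6)(a'''(u_c)t_c + Φ'''(u_c)) = (2n+1)^{9/2}/(96n²)`. -/

noncomputable def g1 : ℝ → ℝ := fun u => -1 / (2 * u * Real.sqrt (1 - u))
noncomputable def g2 : ℝ → ℝ := fun u => (2 - 3*u) / (4 * u^2 * Real.sqrt (1 - u)^3)
noncomputable def g3 : ℝ → ℝ := fun u => -(15*u^2 - 20*u + 8) / (8 * u^3 * Real.sqrt (1 - u)^5)


lemma lemA {u : ℝ} (hu : u ∈ Set.Ioo (0:ℝ) 1) : HasDerivAt Phi (g1 u) u := by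
  obtain ⟨hu0, hu1⟩ := hu
  set s := Real.sqrt (1 - u) with hs_def
  have h1u : (0:ℝ) < 1 - u := by linarith
  have hs : 0 < s := Real.sqrt_pos.mpr h1u
  have hs2 : s^2 = 1 - u := Real.sq_sqrt h1u.le
  have hinner : HasDerivAt (fun y : ℝ => 1 - y) (-1) u := (hasDerivAt_id u).const_sub 1
  have hsq : HasDerivAt (fun x : ℝ => Real.sqrt (1 - x)) (1 / (2 * s) * (-1)) u :=
    (Real.hasDerivAt_sqrt h1u.ne').comp u hinner
  have hlog1 : HasDerivAt (fun x : ℝ => Real.log (1 + Real.sqrt (1 - x)))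
      ((1 + s)⁻¹ * (1 / (2 * s) * (-1))) u :=
    (Real.hasDerivAt_log (by positivity)).comp u (hsq.const_add 1)
  have hlog2 : HasDerivAt (fun x : ℝ => Real.log x / 2) (u⁻¹ / 2) u :=
    (Real.hasDerivAt_log hu0.ne').div_const 2
  have hf : HasDerivAt (fun x : ℝ => Real.log (1 + Real.sqrt (1 - x)) - Real.log x / 2)
      ((1 + s)⁻¹ * (1 / (2 * s) * (-1)) - u⁻¹ / 2) u := hlog1.sub hlog2
  have heq : (1 + s)⁻¹ * (1 / (2 * s) * (-1)) - u⁻¹ / 2 = g1 u := by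
    simp only [g1, ← hs_def]
    have h1s : (0:ℝ) < 1 + s := by linarith
    field_simp
    linear_combination (-1:ℝ) * hs2
  rw [← heq]
  apply hf.congr_of_eventuallyEq
  filter_upwards [isOpen_Ioo.mem_nhds (⟨hu0, hu1⟩ : u ∈ Set.Ioo (0:ℝ) 1)] with x hx
  obtain ⟨hx0, hx1⟩ := hx
  have hsx : (0:ℝ) < Real.sqrt (1 - x) + 1 := by positivity
  rw [Phi, Real.log_div (by positivity) (by positivity), Real.log_sqrt hx0.le]

lemma lemB {u : ℝ} (hu : u ∈ Set.Ioo (0:ℝ) 1) : HasDerivAt g1 (g2 u) u := by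
  obtain ⟨hu0, hu1⟩ := hu
  set s := Real.sqrt (1 - u) with hs_def
  have h1u : (0:ℝ) < 1 - u := by linarith
  have hs : 0 < s := Real.sqrt_pos.mpr h1u
  have hs2 : s^2 = 1 - u := Real.sq_sqrt h1u.le
  have hinner : HasDerivAt (fun y : ℝ => 1 - y) (-1) u := (hasDerivAt_id u).const_sub 1
  have hsq : HasDerivAt (fun x : ℝ => Real.sqrt (1 - x)) (1 / (2 * s) * (-1)) u :=
    (Real.hasDerivAt_sqrt h1u.ne').comp u hinner
  have hD1 : HasDerivAt (fun x : ℝ => 2 * x * Real.sqrt (1 - x))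
      (2 * s + 2 * u * (1 / (2 * s) * (-1))) u := by
    have := ((hasDerivAt_id u).const_mul 2).mul hsq
    exact this.congr_deriv (by simp [hs_def])
  have hne : 2 * u * s ≠ 0 := by positivity
  have h := (hasDerivAt_const u (-1:ℝ)).div hD1 hne
  have heq : ((0:ℝ) * (2 * u * s) - (-1) * (2 * s + 2 * u * (1 / (2 * s) * (-1)))) /
      (2 * u * s)^2 = g2 u := by
    simp only [g2, ← hs_def]
    field_simp
    linear_combination (8:ℝ) * hs2
  have h2 : HasDerivAt (fun x : ℝ => -1 / (2 * x * Real.sqrt (1 - x))) (g2 u) u := by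
    rw [← heq]; exact h
  exact h2


lemma lemC {u : ℝ} (hu : u ∈ Set.Ioo (0:ℝ) 1) : HasDerivAt g2 (g3 u) u := by
  obtain ⟨hu0, hu1⟩ := hu
  set s := Real.sqrt (1 - u) with hs_def
  have h1u : (0:ℝ) < 1 - u := by linarith
  have hs : 0 < s := Real.sqrt_pos.mpr h1u
  have hs2 : s^2 = 1 - u := Real.sq_sqrt h1u.le
  have hinner : HasDerivAt (fun y : ℝ => 1 - y) (-1) u := (hasDerivAt_id u).const_sub 1
  have hsq : HasDerivAt (fun x : ℝ => Real.sqrt (1 - x)) (1 / (2 * s) * (-1)) u :=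
    (Real.hasDerivAt_sqrt h1u.ne').comp u hinner
  have hN : HasDerivAt (fun x : ℝ => 2 - 3 * x) (-3) u := by
    have := ((hasDerivAt_id u).const_mul 3).const_sub 2
    simpa using this
  have hs3 : HasDerivAt (fun x : ℝ => Real.sqrt (1 - x)^3)
      ((3:ℕ) * s^2 * (1 / (2 * s) * (-1))) u := by
    have := hsq.pow 3
    exact this.congr_deriv (by simp [hs_def])
  have hx2 : HasDerivAt (fun x : ℝ => 4 * x^2) (4 * (2 * u)) u := by
    have := (hasDerivAt_pow 2 u).const_mul 4
    simpa [mul_comm] using this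
  have hD2 : HasDerivAt (fun x : ℝ => 4 * x^2 * Real.sqrt (1 - x)^3)
      (4 * (2 * u) * s^3 + 4 * u^2 * ((3:ℕ) * s^2 * (1 / (2 * s) * (-1)))) u := hx2.mul hs3
  have hne : 4 * u^2 * s^3 ≠ 0 := by positivity
  have h := hN.div hD2 hne
  have heq : ((-3) * (4 * u^2 * s^3) - (2 - 3*u) *
      (4 * (2 * u) * s^3 + 4 * u^2 * ((3:ℕ) * s^2 * (1 / (2 * s) * (-1))))) /
      (4 * u^2 * s^3)^2 = g3 u := by
    simp only [g3, ← hs_def]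
    push_cast
    field_simp
    linear_combination (-64 + 48*u) * hs2
  rw [← heq]
  exact h

lemma deriv_cmul (c : ℝ) (j : ℕ) :
    deriv (fun w : ℝ => c * w ^ j) = fun w => (c * j) * w ^ (j-1) := by
  funext w
  rw [deriv_const_mul_field, deriv_pow_field]
  ring


theorem genKdV_critical_point (n : ℕ) (hn : 1 ≤ n)
    (a : ℝ → ℝ) (hadef : a = fun w => 6 * w ^ n)
    (uc tc xc k : ℝ)
    (huc : uc = 2 * n / (2 * n + 1))
    (htc : tc = (1 + 2 * (n : ℝ)) ^ ((n : ℝ) + 1 / 2) / (6 * (2 * (n : ℝ)) ^ (n + 1)))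
    (hxc : xc = Real.sqrt (2 * n + 1) / (2 * n)
        + Real.log ((Real.sqrt (2 * n + 1) + 1) / Real.sqrt (2 * n)))
    (hk : k = (2 * (n : ℝ) + 1) ^ ((9 : ℝ) / 2) / (96 * (n : ℝ) ^ 2)) :
    a uc * tc + Phi uc = xc ∧
    deriv a uc * tc + deriv Phi uc = 0 ∧
    deriv^[2] a uc * tc + deriv^[2] Phi uc = 0 ∧
    -(1 / 6) * (deriv^[3] a uc * tc + deriv^[3] Phi uc) = k := by
  obtain ⟨m, rfl⟩ : ∃ m, n = m + 1 := ⟨n - 1, (Nat.succ_pred_eq_of_pos hn).symm⟩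
  set M : ℝ := (m : ℝ) with hM_def
  have hM0 : 0 ≤ M := Nat.cast_nonneg m
  set A : ℝ := 2 * (M + 1) with hA_def
  set B : ℝ := 2 * (M + 1) + 1 with hB_def
  have hA : 0 < A := by rw [hA_def]; linarith
  have hB : 0 < B := by rw [hB_def]; linarith
  set S : ℝ := Real.sqrt B with hS_def
  have hS : 0 < S := Real.sqrt_pos.mpr hB
  have hS2 : S ^ 2 = B := Real.sq_sqrt hB.le
  -- normalize hypotheses
  have huc' : uc = A / B := by rw [huc, hA_def, hB_def, hM_def]; push_cast; ring_nf
  have hmem : uc ∈ Set.Ioo (0:ℝ) 1 := by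
    rw [huc']
    constructor
    · positivity
    · rw [div_lt_one hB]; rw [hA_def, hB_def]; linarith
  have huc0 : 0 < uc := hmem.1
  have htc' : tc = B ^ (m+1) * S / (6 * A ^ (m+2)) := by
    rw [htc]
    have e2 : (1 : ℝ) + 2 * ((m+1 : ℕ) : ℝ) = B := by rw [hB_def, hM_def]; push_cast; ring
    have e3 : ((m+1 : ℕ) : ℝ) + 1/2 = ((m+1 : ℕ) : ℝ) + 1/2 := rfl
    rw [e2]
    rw [Real.rpow_add hB, Real.rpow_natCast, ← Real.sqrt_eq_rpow, ← hS_def]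
    have e4 : (2 * ((m+1 : ℕ) : ℝ)) = A := by rw [hA_def, hM_def]; push_cast; ring
    rw [e4]
  have hk' : k = B ^ 4 * S / (96 * (M + 1) ^ 2) := by
    rw [hk]
    have e2 : (2 * ((m+1 : ℕ) : ℝ) + 1) = B := by rw [hB_def, hM_def]; push_cast; ring
    have e5 : ((m+1 : ℕ) : ℝ) = M + 1 := by rw [hM_def]; push_cast; ring
    rw [e2, e5]
    rw [show ((9:ℝ)/2) = ((4:ℕ):ℝ) + 1/2 by norm_num, Real.rpow_add hB,
      Real.rpow_natCast, ← Real.sqrt_eq_rpow, ← hS_def]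
  have h1mu : (1:ℝ) - uc = B⁻¹ := by
    rw [huc']
    field_simp
    rw [hA_def, hB_def]; ring
  have hsuc : Real.sqrt (1 - uc) = S⁻¹ := by
    rw [h1mu, Real.sqrt_inv, hS_def]
  have hsu : Real.sqrt uc = Real.sqrt A / S := by
    rw [huc', Real.sqrt_div hA.le, hS_def]
  -- derivatives of a
  have ha1 : deriv a = fun w => (6 * (M+1)) * w ^ m := by
    rw [hadef, deriv_cmul]
    funext w
    rw [hM_def]
    push_cast [Nat.add_sub_cancel]
    ring
  have ha2 : deriv^[2] a = fun w => ((6 * (M+1)) * M) * w ^ (m-1) := by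
    have : deriv^[2] a = deriv (deriv a) := rfl
    rw [this, ha1, deriv_cmul]
  have ha3 : deriv^[3] a = fun w => (((6 * (M+1)) * M) * ((m-1 : ℕ):ℝ)) * w ^ (m-1-1) := by
    have : deriv^[3] a = deriv (deriv^[2] a) := rfl
    rw [this, ha2, deriv_cmul]
  -- derivatives of Phi
  have hP1 : deriv Phi uc = g1 uc := (lemA hmem).deriv
  have hP2each : ∀ u ∈ Set.Ioo (0:ℝ) 1, deriv^[2] Phi u = g2 u := by
    intro u hu
    have h1 : deriv Phi =ᶠ[nhds u] g1 := by
      filter_upwards [isOpen_Ioo.mem_nhds hu] with x hx using (lemA hx).deriv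
    calc deriv^[2] Phi u = deriv (deriv Phi) u := rfl
      _ = deriv g1 u := h1.deriv_eq
      _ = g2 u := (lemB hu).deriv
  have hP2 : deriv^[2] Phi uc = g2 uc := hP2each uc hmem
  have hP3 : deriv^[3] Phi uc = g3 uc := by
    have h2 : deriv^[2] Phi =ᶠ[nhds uc] g2 := by
      filter_upwards [isOpen_Ioo.mem_nhds hmem] with x hx using hP2each x hx
    calc deriv^[3] Phi uc = deriv (deriv^[2] Phi) uc := rfl
      _ = deriv g2 uc := h2.deriv_eq
      _ = g3 uc := (lemC hmem).deriv
  have hsA : Real.sqrt A ≠ 0 := by positivity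
  refine ⟨?_, ?_, ?_, ?_⟩
  · -- equation 1
    have hPhi : Phi uc = Real.log ((S + 1) / Real.sqrt A) := by
      simp only [Phi]
      rw [hsuc, hsu]
      congr 1
      field_simp
    have hxc' : xc = S / A + Real.log ((S + 1) / Real.sqrt A) := by
      rw [hxc]
      have e2 : (2 * ((m+1 : ℕ) : ℝ) + 1) = B := by rw [hB_def, hM_def]; push_cast; ring
      have e4 : (2 * ((m+1 : ℕ) : ℝ)) = A := by rw [hA_def, hM_def]; push_cast; ring
      rw [e2, e4, ← hS_def]
    rw [hPhi, hxc', hadef]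
    simp only
    rw [huc', htc', div_pow]
    field_simp
    ring
  · -- equation 2
    rw [ha1, hP1]
    simp only [g1]
    rw [hsuc, huc', htc', div_pow]
    field_simp
    ring
  · -- equation 3
    rw [ha2, hP2]
    simp only [g2]
    rcases Nat.eq_zero_or_pos m with hm | hm
    · subst hm
      simp only [hM_def, Nat.cast_zero]
      rw [huc']
      norm_num [hA_def, hB_def, hM_def]
    · obtain ⟨p, rfl⟩ : ∃ p, m = p + 1 := ⟨m - 1, (Nat.succ_pred_eq_of_pos hm).symm⟩
      simp only [Nat.add_sub_cancel]
      rw [hsuc, huc', htc', div_pow]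
      have hSi3 : (S⁻¹) ^ 3 = (B * S)⁻¹ := by
        rw [← hS2]; field_simp
      rw [hSi3]
      field_simp
      ring_nf
      rw [hA_def, hB_def]; ring
  · -- equation 4
    rw [ha3, hP3]
    simp only [g3]
    rw [hk']
    have hSi5 : (S⁻¹) ^ 5 = (B^2 * S)⁻¹ := by
      rw [← hS2]; field_simp
    rw [hsuc, hSi5, huc', htc', div_pow]
    match m with
    | 0 =>
      norm_num [hM_def, hA_def, hB_def]
      field_simp
      ring
    | 1 =>
      norm_num [hM_def, hA_def, hB_def]
      field_simp
      ring
    | (p+2) =>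
      rw [show p + 2 - 1 - 1 = p from rfl]
      have e6 : ((p + 2 - 1 : ℕ) : ℝ) = M - 1 := by
        rw [hM_def]; push_cast; ring
      rw [e6]
      field_simp
      ring
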